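/- Let n ≥ 1 and let A be an n × n matrix over the polynomial ring ℤ[t] such that: (1) every entry of A lies in the set {0, 1, t, t−1}; (2) in each row of A, each of the entries 1, t, and t−1 occurs at most once; and (3) no row of A is the zero vector. Then every coefficient a of the polynomial det(A) satisfies |a| ≤ 4^{n−1}. -/

import Mathlib

open Polynomial Finset

private lemma coeff_abs_le_one (p : Polynomial ℤ)
    (hp : p ∈ ({0, 1, X, X - 1} : Set (Polynomial ℤ))) (k : ℕ) :
    |p.coeff k| ≤ 1 := by
  rcases hp with h | h | h | h <;> subst h
  · simp
  · rw [coeff_one]; split_ifs <;> norm_num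
  · rw [coeff_X]; split_ifs <;> norm_num
  · rw [coeff_sub, coeff_one, coeff_X]; split_ifs <;> norm_num

private lemma key (n : ℕ) :
    ∀ (A : Matrix (Fin (n + 1)) (Fin (n + 1)) (Polynomial ℤ)),
    (∀ i j, A i j ∈ ({0, 1, X, X - 1} : Set (Polynomial ℤ))) →
    (∀ i, ∀ v ∈ ({1, X, X - 1} : Set (Polynomial ℤ)),
      (Finset.univ.filter fun j => A i j = v).card ≤ 1) →
    ∀ k, |(A.det).coeff k| ≤ 4 ^ n := by
  induction n with
  | zero =>
      intro A h1 _ k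
      rw [Matrix.det_fin_one]
      simpa using coeff_abs_le_one _ (h1 0 0) k
  | succ n ih =>
      intro A h1 h2 k
      set c : Fin (n + 2) → ℤ := fun j =>
        (if A 0 j = 1 then 1 else 0) + (if A 0 j = X then 1 else 0)
          + 2 * (if A 0 j = X - 1 then 1 else 0) with hc
      have hc0 : ∀ j, 0 ≤ c j := by
        intro j; simp only [hc]; split_ifs <;> norm_num
      -- minors satisfy the hypotheses
      have hM : ∀ j : Fin (n + 2), ∀ m : ℕ,
          |((A.submatrix Fin.succ j.succAbove).det).coeff m| ≤ 4 ^ n := by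
        intro j m
        apply ih
        · intro i c'; exact h1 _ _
        · intro i v hv
          refine le_trans (Finset.card_le_card_of_injOn j.succAbove ?_ ?_)
            (h2 i.succ v hv)
          · intro x hx
            simp only [Finset.mem_coe, Finset.mem_filter, Finset.mem_univ, true_and,
              Matrix.submatrix_apply] at hx ⊢
            exact (Finset.mem_filter.mp hx).2
          · exact (Fin.succAbove_right_injective).injOn
      -- bound each term of the cofactor expansion
      have hterm : ∀ j : Fin (n + 2),
          |(A 0 j * (A.submatrix Fin.succ j.succAbove).det).coeff k|
            ≤ c j * 4 ^ n := by
        intro j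
        set q := (A.submatrix Fin.succ j.succAbove).det with hq'
        have hq := hM j
        have h4 : (0 : ℤ) ≤ 4 ^ n := by positivity
        have hXq : ∀ m : ℕ, |(X * q).coeff m| ≤ 4 ^ n := by
          intro m
          cases m with
          | zero => rw [mul_coeff_zero, coeff_X_zero, zero_mul, abs_zero]; exact h4
          | succ m => rw [coeff_X_mul]; exact hq m
        rcases h1 0 j with h | h | h | h
        pick_goal 4
        · rw [Set.mem_singleton_iff] at h
          rw [h]
          have h2c : (2 : ℤ) ≤ c j := by
            simp only [hc]; rw [if_pos h]; split_ifs <;> norm_num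
          have he : ((X - 1) * q).coeff k = (X * q).coeff k - q.coeff k := by
            rw [sub_mul, one_mul, coeff_sub]
          rw [he]
          have hab : |(X * q).coeff k - q.coeff k|
              ≤ |(X * q).coeff k| + |q.coeff k| := abs_sub _ _
          have : (2 : ℤ) * 4 ^ n ≤ c j * 4 ^ n :=
            mul_le_mul_of_nonneg_right h2c h4
          linarith [hXq k, hq k]
        · rw [h, zero_mul]
          simpa using mul_nonneg (hc0 j) h4
        · rw [h, one_mul]
          have h1c : (1 : ℤ) ≤ c j := by
            simp only [hc]; rw [if_pos h]; split_ifs <;> norm_num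
          exact le_trans (hq k) (le_mul_of_one_le_left h4 h1c)
        · rw [h]
          have h1c : (1 : ℤ) ≤ c j := by
            simp only [hc]; rw [if_pos h]; split_ifs <;> norm_num
          exact le_trans (hXq k) (le_mul_of_one_le_left h4 h1c)
      -- sum of the coefficients c is at most 4
      have hcsum : ∑ j, c j ≤ 4 := by
        have b1 := h2 0 1 (by simp)
        have b2 := h2 0 X (by simp)
        have b3 := h2 0 (X - 1) (by simp)
        have e : ∑ j, c j
            = ((Finset.univ.filter fun j => A 0 j = 1).card : ℤ)
              + ((Finset.univ.filter fun j => A 0 j = X).card : ℤ)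
              + 2 * ((Finset.univ.filter fun j => A 0 j = X - 1).card : ℤ) := by
          simp only [hc, Finset.sum_add_distrib, ← Finset.mul_sum, Finset.sum_boole]
        rw [e]
        have c1 : ((Finset.univ.filter fun j => A 0 j = 1).card : ℤ) ≤ 1 := by
          exact_mod_cast b1
        have c2 : ((Finset.univ.filter fun j => A 0 j = X).card : ℤ) ≤ 1 := by
          exact_mod_cast b2
        have c3 : ((Finset.univ.filter fun j => A 0 j = X - 1).card : ℤ) ≤ 1 := by
          exact_mod_cast b3
        linarith
      -- put it together via cofactor expansion
      rw [Matrix.det_succ_row_zero, finset_sum_coeff]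
      have habs : ∀ j : Fin (n + 2),
          |((-1 : Polynomial ℤ) ^ (j : ℕ) * A 0 j
              * (A.submatrix Fin.succ j.succAbove).det).coeff k|
            ≤ c j * 4 ^ n := by
        intro j
        have hC : ((-1 : Polynomial ℤ) ^ (j : ℕ)) = C ((-1 : ℤ) ^ (j : ℕ)) := by
          simp
        rw [mul_assoc, hC, coeff_C_mul, abs_mul, abs_pow, abs_neg, abs_one,
          one_pow, one_mul]
        exact hterm j
      refine le_trans (Finset.abs_sum_le_sum_abs _ _)
        (le_trans (Finset.sum_le_sum fun j _ => habs j) ?_)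
      rw [← Finset.sum_mul]
      have h4 : (0 : ℤ) ≤ 4 ^ n := by positivity
      refine le_trans (mul_le_mul_of_nonneg_right hcsum h4) (le_of_eq ?_)
      ring

/-- If `A` is an `n × n` matrix over `ℤ[t]` whose entries lie in `{0, 1, t, t-1}`,
such that in each row each of `1`, `t`, `t-1` occurs at most once, and no row is
zero, then every coefficient `a` of `det A` satisfies `|a| ≤ 4^(n-1)`.
(Lemma 3.1.) -/
theorem stmt_5 (n : ℕ) (hn : 1 ≤ n) (A : Matrix (Fin n) (Fin n) (Polynomial ℤ))
    (h1 : ∀ i j, A i j ∈ ({0, 1, X, X - 1} : Set (Polynomial ℤ)))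
    (h2 : ∀ i, ∀ v ∈ ({1, X, X - 1} : Set (Polynomial ℤ)),
      (Finset.univ.filter fun j => A i j = v).card ≤ 1)
    (h3 : ∀ i, ∃ j, A i j ≠ 0) :
    ∀ k, |(A.det).coeff k| ≤ 4 ^ (n - 1) := by
  obtain ⟨m, rfl⟩ : ∃ m, n = m + 1 := ⟨n - 1, (Nat.succ_pred_eq_of_pos hn).symm⟩
  intro k
  simpa using key m A h1 h2 k
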